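/- Let E be a row-finite directed graph without sources, let α,β be finite paths with s(α)=s(β) and |α| < |β|, and let x ∈ E^∞ with r(x_1)=s(α) satisfy αx = βx. Then β = αγ where γ is a cycle of length |β| − |α| with base point s(α), and x = γγγ⋯ is the periodic infinite path repeating γ. -/

import Mathlib

namespace DG

variable {V E : Type} (r s : E → V)

/-- The infinite path space `E^∞` of a directed graph. -/
def Inf : Type := {x : ℕ → E // ∀ i : ℕ, s (x i) = r (x (i + 1))}

/-- The one-sided shift on `E^∞`. -/
def shift (x : Inf r s) : Inf r s := ⟨fun i => x.1 (i + 1), fun i => x.2 (i + 1)⟩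

/-- A finite path of a directed graph; a path of length `0` is a vertex,
recorded by the (then equal) fields `rng = src`. -/
structure FPath where
  len : ℕ
  edges : Fin len → E
  rng : V
  src : V
  compat : ∀ (i : ℕ) (h : i + 1 < len),
    s (edges ⟨i, Nat.lt_of_succ_lt h⟩) = r (edges ⟨i + 1, h⟩)
  rng_eq : ∀ h : 0 < len, r (edges ⟨0, h⟩) = rng
  src_eq : ∀ h : 0 < len, s (edges ⟨len - 1, Nat.sub_lt h Nat.one_pos⟩) = src
  rng_src : len = 0 → rng = src

/-- `y = α x` : the infinite path `y` is the concatenation of the finite path `α`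
with the infinite path `x` (which must start at `s(α)`). -/
def IsConcat (α : FPath r s) (x y : Inf r s) : Prop :=
  r (x.1 0) = α.src ∧ (∀ i : Fin α.len, y.1 i = α.edges i) ∧
    ∀ i : ℕ, x.1 i = y.1 (i + α.len)

/-- The graph groupoid `Γ(E^∞, σ)` as a set. -/
def Gam : Type :=
  {g : Inf r s × ℤ × Inf r s //
    ∃ k l : ℕ, g.2.1 = (k : ℤ) - (l : ℤ) ∧ (shift r s)^[k] g.1 = (shift r s)^[l] g.2.2}

/-- The basic set `Z(α, β) ⊆ Γ(E^∞, σ)`. -/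
def Z (α β : FPath r s) : Set (Gam r s) :=
  {g | ∃ x : Inf r s, IsConcat r s α x g.1.1 ∧ IsConcat r s β x g.1.2.2 ∧
    g.1.2.1 = (α.len : ℤ) - (β.len : ℤ)}

/-- The topology on `Γ(E^∞, σ)` for which the sets `Z(α, β)`, over finite paths
`α, β` with `s(α) = s(β)`, form a basis. -/
instance : TopologicalSpace (Gam r s) :=
  TopologicalSpace.generateFrom
    {S | ∃ α β : FPath r s, α.src = β.src ∧ S = Z r s α β}

/-- The isotropy group bundle `Iso(Γ(E^∞, σ))`. -/
def isoSet : Set (Gam r s) := {g | g.1.1 = g.1.2.2}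

end DG

/-- If `|α| < |β|`, `s(α) = s(β)` and `α x = β x`, then `β = α γ` for a cycle `γ` of
length `|β| - |α|` based at `s(α)`, and `x = γ γ γ ⋯`. -/
theorem stmt14 {V E : Type} [Countable V] [Countable E] (r s : E → V)
    (hrf : ∀ v : V, (r ⁻¹' {v}).Finite) (hns : ∀ v : V, ∃ e : E, r e = v)
    (α β : DG.FPath r s) (hsrc : α.src = β.src) (hlt : α.len < β.len)
    (x : DG.Inf r s) (hx : r (x.1 0) = α.src)
    (y : DG.Inf r s) (hax : DG.IsConcat r s α x y) (hbx : DG.IsConcat r s β x y) :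
    ∃ γ : DG.FPath r s, ∃ hlen : γ.len = β.len - α.len,
      γ.rng = γ.src ∧ γ.rng = α.src ∧
      (∀ i : Fin α.len, β.edges ⟨(i : ℕ), lt_trans i.2 hlt⟩ = α.edges i) ∧
      (∀ j : Fin γ.len, β.edges ⟨α.len + (j : ℕ), by have := j.2; omega⟩ = γ.edges j) ∧
      (∀ (m : ℕ) (i : Fin γ.len), x.1 (m * γ.len + (i : ℕ)) = γ.edges i) := by

  obtain ⟨hx1, ha2, ha3⟩ := hax
  obtain ⟨hx2, hb2, hb3⟩ := hbx
  have hper : ∀ i, x.1 (i + (β.len - α.len)) = x.1 i := by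
    intro i
    rw [ha3 (i + (β.len - α.len)), hb3 i]
    have e : i + (β.len - α.len) + α.len = i + β.len := by omega
    rw [e]
  have hkey : ∀ i : ℕ, ∀ h : i < β.len - α.len,
      x.1 i = β.edges ⟨α.len + i, by omega⟩ := by
    intro i h
    rw [ha3 i]
    have e : i + α.len = α.len + i := Nat.add_comm _ _
    rw [e]
    exact hb2 ⟨α.len + i, by omega⟩
  refine ⟨⟨β.len - α.len,
    fun j => β.edges ⟨α.len + j, by have := j.2; omega⟩,
    α.src, α.src, ?_, ?_, ?_, fun _ => rfl⟩, rfl, rfl, rfl, ?_, fun j => rfl, ?_⟩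
  · intro i h
    have := β.compat (α.len + i) (by omega)
    simp only at this ⊢
    convert this using 3 <;> simp only [Fin.ext_iff, Fin.val_mk] <;> omega
  · intro h
    simp only
    rw [← hkey 0 h, hx]
  · intro h
    rw [hsrc]
    convert β.src_eq (by omega : 0 < β.len) using 2
    exact congrArg β.edges (Fin.ext
      (show α.len + (β.len - α.len - 1) = β.len - 1 by omega))
  · intro i
    have hi := i.2
    rw [← ha2 i]
    have := hb2 ⟨i.1, lt_trans i.2 hlt⟩
    simp only at this
    rw [← this]
  · intro m i
    induction m with
    | zero =>
      simp only [Nat.zero_mul, Nat.zero_add]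
      exact hkey i i.2
    | succ m ih =>
      have e : (m + 1) * (β.len - α.len) + (i : ℕ)
          = (m * (β.len - α.len) + (i : ℕ)) + (β.len - α.len) := by ring
      rw [e, hper]
      exact ih
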